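/- Let n ≥ 1 and R ≥ n be natural numbers, and let a, b be natural numbers with a < n and b < n. Then ⌊a·⌊R·b/n⌋ / R⌋ ≤ ⌊a·b / n⌋ ≤ ⌊a·⌊R·b/n⌋ / R⌋ + 1. -/
import Mathlib


/-- Error bound for the Barrett approximate quotient: for `a, b < n ≤ R`,
the Barrett quotient `⌊a·⌊R·b/n⌋/R⌋` underestimates the true quotient `⌊a·b/n⌋` by at most 1. -/
theorem stmt_4 (n R a b : ℕ) (hn : 1 ≤ n) (hR : n ≤ R) (ha : a < n) (hb : b < n) :
    a * (R * b / n) / R ≤ a * b / n ∧ a * b / n ≤ a * (R * b / n) / R + 1 := by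
  have hnpos : 0 < n := hn
  have hRpos : 0 < R := lt_of_lt_of_le hnpos hR
  have h1 : R * b = n * (R * b / n) + R * b % n := (Nat.div_add_mod (R * b) n).symm
  have h2 : a * b = n * (a * b / n) + a * b % n := (Nat.div_add_mod (a * b) n).symm
  generalize hμ : R * b / n = μ at *
  generalize hq : a * b / n = q at *
  generalize hr1' : R * b % n = r1 at *
  generalize hr2' : a * b % n = r2 at *
  have hr1 : r1 < n := hr1' ▸ Nat.mod_lt _ hnpos
  have hr2 : r2 < n := hr2' ▸ Nat.mod_lt _ hnpos
  have e3 : a * r1 < n * R :=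
    lt_of_lt_of_le (Nat.mul_lt_mul_of_lt_of_lt ha hr1) (Nat.mul_le_mul_left n hR)
  have e4 : a * r2 < n * R :=
    lt_of_lt_of_le (Nat.mul_lt_mul_of_lt_of_lt ha hr2) (Nat.mul_le_mul_left n hR)
  have haR : a ≤ R := le_of_lt (lt_of_lt_of_le ha hR)
  constructor
  · -- a * μ / R ≤ q : show a * μ < (q + 1) * R
    have key : n * (a * μ) < n * ((q + 1) * R) := by nlinarith
    have h5 : a * μ < (q + 1) * R := Nat.lt_of_mul_lt_mul_left key
    exact Nat.lt_succ_iff.mp (Nat.div_lt_iff_lt_mul hRpos |>.mpr h5)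
  · rcases Nat.eq_zero_or_pos q with h | h
    · simp [h]
    · obtain ⟨k, hk⟩ := Nat.exists_eq_add_of_le h
      subst hk
      have e5 : R * (a * b) = R * (n * (Nat.succ 0 + k)) + R * r2 := by rw [h2]; ring
      have e6 : a * (R * b) = a * (n * μ) + a * r1 := by rw [h1]; ring
      have key : n * (k * R) ≤ n * (a * μ) := by nlinarith
      have h3 : k * R ≤ a * μ := Nat.le_of_mul_le_mul_left key hnpos
      have h4 : k ≤ a * μ / R := (Nat.le_div_iff_mul_le hRpos).2 h3
      omega
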